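/- Let m, k ≥ 1 and A, B ≥ 0 be integers. If A + B = C(m+k, k) − 1, then A^{-<m>} + B_{<k>} = C(m+k−1, k) − 1 (with the convention that 0^{-<m>} = 0_{<k>} = 0). -/

import Mathlib

/-- Binomial coefficient with the convention `C(a, b) = 0` whenever `b = 0`
(the convention `C(a, b) = 0` for `a < b` is already built into `Nat.choose`). -/
def mchoose (a b : ℕ) : ℕ := if b = 0 then 0 else Nat.choose a b

/-- `IsMacaulayRep A n δ c` says that
`A = C(c n, n) + C(c (n-1), n-1) + ⋯ + C(c δ, δ)` is the `n`-th Macaulay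
representation of `A`, i.e. `1 ≤ δ ≤ n`, `c j ≥ j` for `δ ≤ j ≤ n`, and the
`c j` are strictly increasing in `j` on `[δ, n]`. -/
def IsMacaulayRep (A n δ : ℕ) (c : ℕ → ℕ) : Prop :=
  1 ≤ δ ∧ δ ≤ n ∧ (∀ j, δ ≤ j → j ≤ n → j ≤ c j) ∧
    (∀ j, δ ≤ j → j < n → c j < c (j + 1)) ∧
    A = ∑ j ∈ Finset.Icc δ n, Nat.choose (c j) j

/-- `IsMacaulayLower A n v` says that `v = A_{<n>} = C(a_n - 1, n) + ⋯ + C(a_δ - 1, δ)`,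
computed from the `n`-th Macaulay representation of `A`, with the convention `0_{<n>} = 0`. -/
def IsMacaulayLower (A n v : ℕ) : Prop :=
  (A = 0 ∧ v = 0) ∨
    ∃ δ c, IsMacaulayRep A n δ c ∧ v = ∑ j ∈ Finset.Icc δ n, Nat.choose (c j - 1) j

/-- `IsMacaulayMinus A n v` says that `v = A^{-<n>} = C(a_n - 1, n-1) + ⋯ + C(a_δ - 1, δ-1)`,
computed from the `n`-th Macaulay representation of `A`, with the convention `0^{-<n>} = 0`
(and `C(a, 0) = 0`). -/
def IsMacaulayMinus (A n v : ℕ) : Prop :=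
  (A = 0 ∧ v = 0) ∨
    ∃ δ c, IsMacaulayRep A n δ c ∧ v = ∑ j ∈ Finset.Icc δ n, mchoose (c j - 1) (j - 1)

/-- `IsMacaulayUpper A n v` says that `v = A^{<n>} = C(a_n + 1, n+1) + ⋯ + C(a_δ + 1, δ+1)`,
computed from the `n`-th Macaulay representation of `A`, with the convention `0^{<n>} = 0`. -/
def IsMacaulayUpper (A n v : ℕ) : Prop :=
  (A = 0 ∧ v = 0) ∨
    ∃ δ c, IsMacaulayRep A n δ c ∧ v = ∑ j ∈ Finset.Icc δ n, Nat.choose (c j + 1) (j + 1)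

/-- greedy top coefficient -/
def mtop (A n : ℕ) : ℕ := Nat.findGreatest (fun x => Nat.choose x n ≤ A) (A + n)

def msum (f : ℕ → ℕ → ℕ) : ℕ → ℕ → ℕ
  | 0, _ => 0
  | n+1, A =>
    if A = 0 then 0 else
      f (mtop A (n+1)) (n+1) + msum f n (A - Nat.choose (mtop A (n+1)) (n+1))

lemma msum_zero (f : ℕ → ℕ → ℕ) (n : ℕ) : msum f n 0 = 0 := by
  cases n <;> simp [msum]

lemma succ_le_choose (n t : ℕ) : t + 1 ≤ Nat.choose (n + 1 + t) (n + 1) := by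
  induction t with
  | zero => simp
  | succ t ih =>
    have h : Nat.choose (n + 1 + t + 1) (n + 1) =
        Nat.choose (n + 1 + t) n + Nat.choose (n + 1 + t) (n + 1) :=
      Nat.choose_succ_succ' _ _
    have hpos : 0 < Nat.choose (n + 1 + t) n := Nat.choose_pos (by omega)
    have : Nat.choose (n + 1 + (t + 1)) (n + 1) = Nat.choose (n + 1 + t + 1) (n + 1) := rfl
    omega

lemma mtop_eq {A n x : ℕ} (hn : 1 ≤ n) (h1 : Nat.choose x n ≤ A)
    (h2 : A < Nat.choose (x + 1) n) : mtop A n = x := by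
  have hxb : x ≤ A + n := by
    rcases le_or_gt x n with h | h
    · omega
    · obtain ⟨n', rfl⟩ : ∃ n', n = n' + 1 := ⟨n - 1, by omega⟩
      have := succ_le_choose n' (x - (n' + 1))
      rw [show n' + 1 + (x - (n' + 1)) = x by omega] at this
      omega
  rw [mtop, Nat.findGreatest_eq_iff]
  refine ⟨hxb, fun _ => h1, fun y hy hyb => ?_⟩
  have := Nat.choose_le_choose n (show x + 1 ≤ y by omega)
  omega

lemma hockey (x : ℕ) : ∀ r, ∑ j ∈ Finset.range (r + 1), Nat.choose (x + j) j
    = Nat.choose (x + r + 1) r := by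
  intro r
  induction r with
  | zero => simp
  | succ r ih =>
    rw [Finset.sum_range_succ, ih]
    show Nat.choose (x + r + 1) r + Nat.choose (x + r + 1) (r + 1)
      = Nat.choose (x + r + 1 + 1) (r + 1)
    exact (Nat.choose_succ_succ' (x + r + 1) r).symm


lemma rep_mono {A n δ c} (h : IsMacaulayRep A n δ c) :
    ∀ i j, δ ≤ i → i ≤ j → j ≤ n → c i + (j - i) ≤ c j := by
  obtain ⟨h1, h2, h3, h4, h5⟩ := h
  intro i j hi hij
  induction j, hij using Nat.le_induction with
  | base => intro; omega
  | succ j hj ih =>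
    intro hjn
    have h4' := h4 j (by omega) (by omega)
    have := ih (by omega)
    omega

lemma rep_le {A n δ c} (h : IsMacaulayRep A n δ c) : Nat.choose (c n) n ≤ A := by
  obtain ⟨h1, h2, h3, h4, h5⟩ := h
  rw [h5]
  exact Finset.single_le_sum (f := fun j => Nat.choose (c j) j)
    (fun i _ => Nat.zero_le _) (Finset.mem_Icc.2 ⟨h2, le_rfl⟩)

lemma rep_pos {A n δ c} (h : IsMacaulayRep A n δ c) : 1 ≤ A := by
  have h1 := rep_le h
  have h2 : 0 < Nat.choose (c n) n := Nat.choose_pos (h.2.2.1 n h.2.1 le_rfl)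
  omega

lemma rep_lt {A n δ c} (h : IsMacaulayRep A n δ c) : A < Nat.choose (c n + 1) n := by
  have hrep := h
  obtain ⟨h1, h2, h3, h4, h5⟩ := h
  obtain ⟨p, rfl⟩ : ∃ p, n = p + 1 := ⟨n - 1, by omega⟩
  have hcn : p + 1 ≤ c (p + 1) := h3 (p + 1) h2 le_rfl
  set x := c (p + 1) - (p + 1) with hx
  have htail : ∑ j ∈ Finset.Icc δ p, Nat.choose (c j) j
      ≤ Nat.choose (c (p + 1)) p - 1 := by
    have step1 : ∑ j ∈ Finset.Icc δ p, Nat.choose (c j) j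
        ≤ ∑ j ∈ Finset.Icc δ p, Nat.choose (x + j) j := by
      apply Finset.sum_le_sum
      intro j hj
      rw [Finset.mem_Icc] at hj
      have := rep_mono hrep j (p + 1) hj.1 (by omega) le_rfl
      exact Nat.choose_le_choose j (by omega)
    have step2 : ∑ j ∈ Finset.Icc δ p, Nat.choose (x + j) j
        ≤ ∑ j ∈ Finset.Icc 1 p, Nat.choose (x + j) j := by
      apply Finset.sum_le_sum_of_subset
      apply Finset.Icc_subset_Icc_left h1
    have step3 : ∑ j ∈ Finset.Icc 1 p, Nat.choose (x + j) j
        = Nat.choose (c (p + 1)) p - 1 := by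
      have hr : ∑ j ∈ Finset.range (p + 1), Nat.choose (x + j) j
          = Nat.choose (x + p + 1) p := hockey x p
      rw [Finset.sum_range_succ'] at hr
      simp only [Nat.add_zero, Nat.choose_zero_right] at hr
      have hIcc : ∑ j ∈ Finset.Icc 1 p, Nat.choose (x + j) j
          = ∑ j ∈ Finset.range p, Nat.choose (x + (j + 1)) (j + 1) := by
        rw [← Finset.Ico_add_one_right_eq_Icc, Finset.sum_Ico_eq_sum_range]
        apply Finset.sum_congr (by rw [Nat.add_sub_cancel])
        intro j _
        rw [Nat.add_comm 1 j]
      rw [hIcc, show x + p + 1 = c (p + 1) from by omega] at *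
      omega
    omega
  have hAeq : A = (∑ j ∈ Finset.Icc δ p, Nat.choose (c j) j)
      + Nat.choose (c (p + 1)) (p + 1) := by
    rw [h5, Finset.sum_Icc_succ_top h2]
  have hpos : 0 < Nat.choose (c (p + 1)) p := Nat.choose_pos (by omega)
  have hpas : Nat.choose (c (p + 1) + 1) (p + 1)
      = Nat.choose (c (p + 1)) p + Nat.choose (c (p + 1)) (p + 1) :=
    Nat.choose_succ_succ' _ _
  omega

lemma rep_msum (f : ℕ → ℕ → ℕ) : ∀ n A δ c, IsMacaulayRep A n δ c →
    msum f n A = ∑ j ∈ Finset.Icc δ n, f (c j) j := by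
  intro n
  induction n with
  | zero => intro A δ c h; exact absurd (h.2.1) (by have := h.1; omega)
  | succ p ih =>
    intro A δ c h
    have hrep := h
    obtain ⟨h1, h2, h3, h4, h5⟩ := h
    have hA1 : 1 ≤ A := rep_pos hrep
    have htop : mtop A (p + 1) = c (p + 1) :=
      mtop_eq (by omega) (rep_le hrep) (rep_lt hrep)
    rw [msum, if_neg (by omega), htop]
    rcases eq_or_lt_of_le h2 with hδ | hδ
    · subst hδ
      rw [Finset.Icc_self, Finset.sum_singleton] at h5 ⊢
      rw [h5, Nat.sub_self, msum_zero, Nat.add_zero]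
    · have hδp : δ ≤ p := by omega
      have hrep' : IsMacaulayRep (A - Nat.choose (c (p + 1)) (p + 1)) p δ c := by
        refine ⟨h1, hδp, fun j hj hjp => h3 j hj (by omega),
          fun j hj hjp => h4 j hj (by omega), ?_⟩
        rw [h5, Finset.sum_Icc_succ_top h2]
        omega
      rw [ih _ _ _ hrep', Finset.sum_Icc_succ_top h2]
      exact Nat.add_comm _ _

lemma key_aux : ∀ n m k B, m + k ≤ n → 1 ≤ m → 1 ≤ k →
    B ≤ Nat.choose (m + k) k - 1 →
    msum (fun a j => mchoose (a - 1) (j - 1)) m (Nat.choose (m + k) k - 1 - B)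
      + msum (fun a j => Nat.choose (a - 1) j) k B
      = Nat.choose (m + k - 1) k - 1 := by
  intro n
  induction n with
  | zero => intro m k B h hm hk _; omega
  | succ n ih =>
    intro m k B hmk hm hk hB
    have hNpos : 0 < Nat.choose (m + k) k := Nat.choose_pos (by omega)
    have hN : Nat.choose (m + k) k
        = Nat.choose (m + k - 1) (k - 1) + Nat.choose (m + k - 1) k := by
      obtain ⟨k', rfl⟩ : ∃ k', k = k' + 1 := ⟨k - 1, by omega⟩
      rw [show m + (k' + 1) = (m + k') + 1 from by omega, Nat.choose_succ_succ' (m + k') k']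
      simp
    rcases le_or_gt (Nat.choose (m + k - 1) k) B with hc | hc
    · -- Case 1: top coefficient of B is m + k - 1
      have hck : k ≤ m + k - 1 := by omega
      have hBpos : 0 < B := lt_of_lt_of_le (Nat.choose_pos hck) hc
      have htopB : mtop B k = m + k - 1 := by
        apply mtop_eq hk hc
        rw [show m + k - 1 + 1 = m + k from by omega]
        omega
      obtain ⟨k', rfl⟩ : ∃ k', k = k' + 1 := ⟨k - 1, by omega⟩
      rw [msum, if_neg (by omega), htopB]
      rcases Nat.eq_zero_or_pos k' with rfl | hk'
      · -- k = 1
        simp only [Nat.zero_add] at hB hN hc htopB ⊢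
        rw [show m + 1 - 1 = m from rfl] at hc ⊢
        have hm1 : Nat.choose (m + 1) 1 = m + 1 := Nat.choose_one_right _
        have hm2 : Nat.choose m 1 = m := Nat.choose_one_right _
        have hBm : B = m := by omega
        have hA0 : Nat.choose (m + 1) 1 - 1 - B = 0 := by omega
        rw [hA0, msum_zero, msum]
        have hm3 : Nat.choose (m - 1) 1 = m - 1 := Nat.choose_one_right _
        omega
      · -- k ≥ 2
        set B' := B - Nat.choose (m + (k' + 1) - 1) (k' + 1) with hB'def
        have e1 : m + (k' + 1) - 1 = m + k' := by omega
        rw [e1] at htopB hc hB'def ⊢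
        have hPas : Nat.choose (m + (k' + 1)) (k' + 1)
            = Nat.choose (m + k') k' + Nat.choose (m + k') (k' + 1) := by
          rw [show m + (k' + 1) = (m + k') + 1 from by omega]
          exact Nat.choose_succ_succ' (m + k') k'
        have hposk : 0 < Nat.choose (m + k') k' := Nat.choose_pos (by omega)
        have hB'le : B' ≤ Nat.choose (m + k') k' - 1 := by omega
        have hAeq : Nat.choose (m + (k' + 1)) (k' + 1) - 1 - B
            = Nat.choose (m + k') k' - 1 - B' := by omega
        have hIH := ih m k' B' (by omega) hm hk' hB'le
        rw [hAeq]
        have hPas2 : Nat.choose (m + k') (k' + 1)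
            = Nat.choose (m + k' - 1) k' + Nat.choose (m + k' - 1) (k' + 1) := by
          rw [show m + k' = (m + k' - 1) + 1 from by omega]
          rw [show m + k' - 1 + 1 - 1 = m + k' - 1 from by omega]
          exact Nat.choose_succ_succ' _ _
        have hpos2 : 0 < Nat.choose (m + k' - 1) k' := Nat.choose_pos (by omega)
        omega
    · -- Case 2: top coefficient of A (in degree m) is m + k - 1
      set A := Nat.choose (m + k) k - 1 - B with hAdef
      have hsym1 : Nat.choose (m + k - 1) (k - 1) = Nat.choose (m + k - 1) m := by
        rw [show k - 1 = m + k - 1 - m from by omega]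
        exact Nat.choose_symm (by omega)
      have hsym2 : Nat.choose (m + k) k = Nat.choose (m + k) m := by
        have h := Nat.choose_symm (show m ≤ m + k by omega)
        rwa [show m + k - m = k from by omega] at h
      have hAge : Nat.choose (m + k - 1) m ≤ A := by omega
      have hAlt : A < Nat.choose (m + k) m := by omega
      have htopA : mtop A m = m + k - 1 := by
        apply mtop_eq hm hAge
        rw [show m + k - 1 + 1 = m + k from by omega]
        exact hAlt
      obtain ⟨m', rfl⟩ : ∃ m', m = m' + 1 := ⟨m - 1, by omega⟩
      have hApos : 0 < A :=
        lt_of_lt_of_le (Nat.choose_pos (show m' + 1 ≤ m' + 1 + k - 1 by omega)) hAge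
      rw [msum, if_neg (by omega), htopA]
      have e1 : m' + 1 + k - 1 = m' + k := by omega
      rw [e1] at htopA hc hsym1 hAge ⊢
      rcases Nat.eq_zero_or_pos m' with rfl | hm'
      · -- m = 1
        simp only [Nat.zero_add] at hB hc hAdef hAge htopA ⊢
        have hkk : Nat.choose k k = 1 := Nat.choose_self k
        have hB0 : B = 0 := by omega
        subst hB0
        rw [msum_zero, msum]
        have hmc : mchoose (k - 1) (1 - 1) = 0 := rfl
        rw [hmc]
        omega
      · -- m ≥ 2
        set A' := A - Nat.choose (m' + k) (m' + 1) with hA'def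
        have hPas : Nat.choose (m' + 1 + k) (m' + 1)
            = Nat.choose (m' + k) m' + Nat.choose (m' + k) (m' + 1) := by
          rw [show m' + 1 + k = (m' + k) + 1 from by omega]
          exact Nat.choose_succ_succ' (m' + k) m'
        have hsym3 : Nat.choose (m' + k) m' = Nat.choose (m' + k) k := by
          have h := Nat.choose_symm (show k ≤ m' + k by omega)
          rwa [show m' + k - k = m' from by omega] at h
        have hA'eq : A' = Nat.choose (m' + k) k - 1 - B := by
          rw [hA'def, hAdef, hsym2]
          omega
        have hposk2 : 0 < Nat.choose (m' + k) k := Nat.choose_pos (by omega)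
        have hB'le : B ≤ Nat.choose (m' + k) k - 1 := by omega
        have hIH := ih m' k B (by omega) hm' hk hB'le
        rw [hA'eq]
        simp only [mchoose] at hIH ⊢
        rw [if_neg (show ¬ (m' + 1 - 1 = 0) from by omega)]
        have hsym4 : Nat.choose (m' + k - 1) (m' + 1 - 1)
            = Nat.choose (m' + k - 1) (k - 1) := by
          rw [show m' + 1 - 1 = m' from rfl]
          have h := Nat.choose_symm (show k - 1 ≤ m' + k - 1 by omega)
          rwa [show m' + k - 1 - (k - 1) = m' from by omega] at h
        have hPas2 : Nat.choose (m' + k) k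
            = Nat.choose (m' + k - 1) (k - 1) + Nat.choose (m' + k - 1) k := by
          obtain ⟨k'', rfl⟩ : ∃ k'', k = k'' + 1 := ⟨k - 1, by omega⟩
          rw [show m' + (k'' + 1) = (m' + k'') + 1 from by omega,
            Nat.choose_succ_succ' (m' + k'') k'']
          simp
        have hpos3 : 0 < Nat.choose (m' + k - 1) k := Nat.choose_pos (by omega)
        have hpos4 : 0 < Nat.choose (m' + k - 1) (k - 1) := Nat.choose_pos (by omega)
        omega

/-- **Key combinatorial lemma.** If `m, k ≥ 1`, `A, B ≥ 0` and
`A + B = C(m+k, k) - 1`, then `A^{-<m>} + B_{<k>} = C(m+k-1, k) - 1`,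
with the convention `0^{-<m>} = 0_{<k>} = 0`. -/
theorem macaulay_key_lemma (m k A B Am Bk : ℕ) (hm : 1 ≤ m) (hk : 1 ≤ k)
    (hAB : A + B = Nat.choose (m + k) k - 1)
    (hA : IsMacaulayMinus A m Am) (hB : IsMacaulayLower B k Bk) :
    Am + Bk = Nat.choose (m + k - 1) k - 1 := by
  have hNpos : 0 < Nat.choose (m + k) k := Nat.choose_pos (by omega)
  have hBle : B ≤ Nat.choose (m + k) k - 1 := by omega
  have hAeq : A = Nat.choose (m + k) k - 1 - B := by omega
  have hAm : Am = msum (fun a j => mchoose (a - 1) (j - 1)) m A := by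
    rcases hA with ⟨hA0, hv⟩ | ⟨δ, c, hrep, hv⟩
    · rw [hv, hA0, msum_zero]
    · rw [hv, rep_msum _ _ _ _ _ hrep]
  have hBk : Bk = msum (fun a j => Nat.choose (a - 1) j) k B := by
    rcases hB with ⟨hB0, hv⟩ | ⟨δ, c, hrep, hv⟩
    · rw [hv, hB0, msum_zero]
    · rw [hv, rep_msum _ _ _ _ _ hrep]
  rw [hAm, hBk, hAeq]
  exact key_aux (m + k) m k B le_rfl hm hk hBle
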